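/- Let P be a regular poset on [n] and i ∈ [n-1]. If i ≼_P i+1 is a covering relation, then swapping the labels i and i+1 yields a regular poset s_i · P that is distinct from P as an edge-decorated poset (the covering edge changes from weak to strict). -/
import Mathlib


/-- The adjacent transposition `s_i` of `Fin n` (0-indexed), swapping `i` and `i+1`. -/
def adj (n i : ℕ) (h : i + 1 < n) : Equiv.Perm (Fin n) :=
  Equiv.swap ⟨i, Nat.lt_of_succ_lt h⟩ ⟨i + 1, h⟩

/-- A poset with ground set `Fin n` (`[n]`, 0-indexed). -/
structure FinPoset (n : ℕ) where
  le : Fin n → Fin n → Prop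
  refl : ∀ a, le a a
  trans : ∀ a b c, le a b → le b c → le a c
  antisymm : ∀ a b, le a b → le b a → a = b

/-- `Σ_L(P)`: the permutations `σ` with `σ(i) ≤ σ(j)` whenever `i ≼_P j`. -/
def SigmaL {n : ℕ} (P : FinPoset n) : Set (Equiv.Perm (Fin n)) :=
  {σ | ∀ i j : Fin n, P.le i j → σ i ≤ σ j}

/-- `P` is regular: whenever `x ≼_P z` and `y` lies strictly between `x` and `z` in the
integer order, `x ≼_P y` or `y ≼_P z`. -/
def Regular {n : ℕ} (P : FinPoset n) : Prop :=
  ∀ x y z : Fin n, P.le x z → ((x < y ∧ y < z) ∨ (z < y ∧ y < x)) →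
    P.le x y ∨ P.le y z

/-- The poset `σ · P`, obtained by relabelling: `i ≼ j` iff `σ⁻¹(i) ≼_P σ⁻¹(j)`. -/
def permPoset {n : ℕ} (σ : Equiv.Perm (Fin n)) (P : FinPoset n) : FinPoset n where
  le i j := P.le (σ⁻¹ i) (σ⁻¹ j)
  refl _ := P.refl _
  trans _ _ _ h1 h2 := P.trans _ _ _ h1 h2
  antisymm _ _ h1 h2 := σ⁻¹.injective (P.antisymm _ _ h1 h2)

/-- `b` covers `a` in `P`. -/
def Covers {n : ℕ} (P : FinPoset n) (a b : Fin n) : Prop :=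
  a ≠ b ∧ P.le a b ∧ ¬ ∃ c, c ≠ a ∧ c ≠ b ∧ P.le a c ∧ P.le c b

/-- `a` and `b` are comparable in `P`. -/
def Cmp {n : ℕ} (P : FinPoset n) (a b : Fin n) : Prop :=
  P.le a b ∨ P.le b a

/-- If `i ≼_P i+1` is a covering relation in a regular poset `P`, then
swapping the labels `i` and `i+1` yields a regular poset `s_i · P`, distinct from `P`
(as an edge-decorated poset: the covering edge `i+1 ⋖ i` of `s_i · P` is now strict). -/
theorem stmt8 (n : ℕ) (P : FinPoset n) (hP : Regular P) (i : ℕ) (h : i + 1 < n)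
    (hcov : Covers P ⟨i, Nat.lt_of_succ_lt h⟩ ⟨i + 1, h⟩) :
    Regular (permPoset (adj n i h) P) ∧
      Covers (permPoset (adj n i h) P) ⟨i + 1, h⟩ ⟨i, Nat.lt_of_succ_lt h⟩ ∧
      (permPoset (adj n i h) P).le ≠ P.le := by

  classical
  set a : Fin n := ⟨i, Nat.lt_of_succ_lt h⟩ with ha
  set b : Fin n := ⟨i + 1, h⟩ with hb
  set σ : Equiv.Perm (Fin n) := adj n i h with hσ
  have hsinv : σ⁻¹ = σ := Equiv.swap_inv _ _
  have hsa : σ a = b := Equiv.swap_apply_left _ _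
  have hsb : σ b = a := Equiv.swap_apply_right _ _
  have hso : ∀ x : Fin n, x ≠ a → x ≠ b → σ x = x := fun x h1 h2 =>
    Equiv.swap_apply_of_ne_of_ne h1 h2
  have hav : a.val = i := rfl
  have hbv : b.val = i + 1 := rfl
  have hne : a ≠ b := hcov.1
  have hPab : P.le a b := hcov.2.1
  have hQ : ∀ x y : Fin n, (permPoset σ P).le x y ↔ P.le (σ x) (σ y) := by
    intro x y; simp [permPoset, hsinv]
  -- helper: σ moves points by at most one step
  have hlt1 : ∀ u v : Fin n, u < v → v ≠ a → v ≠ b → σ u < v := by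
    intro u v huv hva hvb
    by_cases h1 : u = a
    · subst h1; rw [hsa]
      have : (a : Fin n).val < v.val := huv
      have hva' : v.val ≠ i + 1 := fun hh => hvb (Fin.ext hh)
      exact Fin.lt_def.mpr (by omega)
    · by_cases h2 : u = b
      · subst h2; rw [hsb]
        exact lt_trans (Fin.lt_def.mpr (by simp [ha, hb])) huv
      · rw [hso u h1 h2]; exact huv
  have hlt2 : ∀ u v : Fin n, u < v → u ≠ a → u ≠ b → u < σ v := by
    intro u v huv hua hub
    by_cases h1 : v = a
    · subst h1; rw [hsa]
      exact lt_trans huv (Fin.lt_def.mpr (by simp [ha, hb]))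
    · by_cases h2 : v = b
      · subst h2; rw [hsb]
        have : u.val < i + 1 := huv
        have hua' : u.val ≠ i := fun hh => hua (Fin.ext hh)
        exact Fin.lt_def.mpr (by omega)
      · rw [hso v h1 h2]; exact huv
  refine ⟨?_, ?_, ?_⟩
  · -- Regularity
    intro x y z hxz hbet
    rw [hQ] at hxz
    rw [hQ, hQ]
    by_cases hya : y = a
    · subst hya
      rw [hsa]
      rcases hbet with ⟨hxy, hyz⟩ | ⟨hzy, hyx⟩
      · -- x < a < z
        have hxa : x ≠ a := ne_of_lt hxy
        have hxb : x ≠ b := by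
          intro hh; subst hh
          exact absurd hxy (by exact not_lt_of_gt (Fin.lt_def.mpr (by simp [ha, hb])))
        rw [hso x hxa hxb] at hxz ⊢
        by_cases hzb : z = b
        · subst hzb; rw [hsb] at hxz
          exact Or.inl (P.trans _ _ _ hxz hPab)
        · have hza : z ≠ a := ne_of_gt hyz
          rw [hso z hza hzb] at hxz ⊢
          have hbz : b < z := by
            have h1 : (a : Fin n).val < z.val := hyz
            have h2 : z.val ≠ i + 1 := fun hh => hzb (Fin.ext hh)
            exact Fin.lt_def.mpr (by omega)
          have hxb' : x < b := lt_trans hxy (Fin.lt_def.mpr (by simp [ha, hb]))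
          exact hP x b z hxz (Or.inl ⟨hxb', hbz⟩)
      · -- z < a < x
        have hza : z ≠ a := ne_of_lt hzy
        have hzb : z ≠ b := by
          intro hh; subst hh
          exact absurd hzy (by exact not_lt_of_gt (Fin.lt_def.mpr (by simp [ha, hb])))
        rw [hso z hza hzb] at hxz ⊢
        by_cases hxb : x = b
        · subst hxb; rw [hsb]
          exact Or.inl hPab
        · have hxa : x ≠ a := ne_of_gt hyx
          rw [hso x hxa hxb] at hxz ⊢
          have hbx : b < x := by
            have h1 : (a : Fin n).val < x.val := hyx
            have h2 : x.val ≠ i + 1 := fun hh => hxb (Fin.ext hh)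
            exact Fin.lt_def.mpr (by omega)
          have hzb' : z < b := lt_trans hzy (Fin.lt_def.mpr (by simp [ha, hb]))
          exact hP x b z hxz (Or.inr ⟨hzb', hbx⟩)
    · by_cases hyb : y = b
      · subst hyb
        rw [hsb]
        rcases hbet with ⟨hxy, hyz⟩ | ⟨hzy, hyx⟩
        · -- x < b < z
          have hzb : z ≠ b := ne_of_gt hyz
          have hza : z ≠ a :=
            ne_of_gt (lt_trans (Fin.lt_def.mpr (by simp [ha, hb])) hyz)
          rw [hso z hza hzb] at hxz ⊢
          by_cases hxa : x = a
          · subst hxa; rw [hsa] at hxz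
            exact Or.inr (P.trans _ _ _ hPab hxz)
          · have hxb : x ≠ b := ne_of_lt hxy
            rw [hso x hxa hxb] at hxz ⊢
            have hxa' : x < a := by
              have h1 : x.val < i + 1 := hxy
              have h2 : x.val ≠ i := fun hh => hxa (Fin.ext hh)
              exact Fin.lt_def.mpr (by omega)
            have haz : a < z := lt_trans (Fin.lt_def.mpr (by simp [ha, hb])) hyz
            exact hP x a z hxz (Or.inl ⟨hxa', haz⟩)
        · -- z < b < x
          have hxb : x ≠ b := ne_of_gt hyx
          have hxa : x ≠ a :=
            ne_of_gt (lt_trans (Fin.lt_def.mpr (by simp [ha, hb])) hyx)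
          rw [hso x hxa hxb] at hxz ⊢
          by_cases hza : z = a
          · subst hza; rw [hsa]
            exact Or.inr hPab
          · have hzb : z ≠ b := ne_of_lt hzy
            rw [hso z hza hzb] at hxz ⊢
            have hza' : z < a := by
              have h1 : z.val < i + 1 := hzy
              have h2 : z.val ≠ i := fun hh => hza (Fin.ext hh)
              exact Fin.lt_def.mpr (by omega)
            have hax : a < x := lt_trans (Fin.lt_def.mpr (by simp [ha, hb])) hyx
            exact hP x a z hxz (Or.inr ⟨hza', hax⟩)
      · -- y ∉ {a, b}
        rw [hso y hya hyb]
        rcases hbet with ⟨hxy, hyz⟩ | ⟨hzy, hyx⟩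
        · exact hP (σ x) y (σ z) hxz (Or.inl ⟨hlt1 x y hxy hya hyb, hlt2 y z hyz hya hyb⟩)
        · exact hP (σ x) y (σ z) hxz (Or.inr ⟨hlt1 z y hzy hya hyb, hlt2 y x hyx hya hyb⟩)
  · -- Covers
    refine ⟨hne.symm, ?_, ?_⟩
    · rw [hQ, hsa, hsb]
      exact hPab
    · rintro ⟨c, hc1, hc2, hc3, hc4⟩
      rw [hQ] at hc3 hc4
      rw [hsb] at hc3
      rw [hsa] at hc4
      exact hcov.2.2 ⟨σ c, fun hh => hc1 (σ.injective (hh.trans hsb.symm)),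
        fun hh => hc2 (σ.injective (hh.trans hsa.symm)), hc3, hc4⟩
  · -- distinctness
    intro heq
    have h1 : (permPoset σ P).le b a := by rw [hQ, hsa, hsb]; exact hPab
    rw [heq] at h1
    exact hne (P.antisymm a b hPab h1)
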